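/- For all ψ ∈ 𝒮(ℝ²): ∫_{ℝ²} ψ_y·(∂_xΔψ)·ψ_x dxdy − ∫_{ℝ²} ψ_x·(∂_yΔψ)·ψ_x dxdy = −∫_{ℝ²} ψ_y·|∇ψ_x|² dxdy + ∫_{ℝ²} ψ_x·(∇ψ_x·∇ψ_y) dxdy. -/

import Mathlib

open MeasureTheory Real SchwartzMap

/-- Horizontal partial derivative `∂_x` of a function on `ℝ²`. -/
noncomputable def pd1 (f : ℝ × ℝ → ℝ) : ℝ × ℝ → ℝ := fun p => fderiv ℝ f p ((1 : ℝ), (0 : ℝ))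

/-- Vertical partial derivative `∂_y` of a function on `ℝ²`. -/
noncomputable def pd2 (f : ℝ × ℝ → ℝ) : ℝ × ℝ → ℝ := fun p => fderiv ℝ f p ((0 : ℝ), (1 : ℝ))

/-- The Laplacian `Δ = ∂_x² + ∂_y²` on `ℝ²`. -/
noncomputable def lap (f : ℝ × ℝ → ℝ) : ℝ × ℝ → ℝ := fun p => pd1 (pd1 f) p + pd2 (pd2 f) p

namespace CrossAux

lemma schwartz_htg {E F : Type*} [NormedAddCommGroup E] [NormedSpace ℝ E]
    [NormedAddCommGroup F] [NormedSpace ℝ F] (f : 𝓢(E, F)) :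
    Function.HasTemperateGrowth ⇑f := by
  refine ⟨f.smooth ⊤, fun n => ⟨0, SchwartzMap.seminorm ℝ 0 n f, fun x => ?_⟩⟩
  simpa using norm_iteratedFDeriv_le_seminorm ℝ f n x

/-- Product of two Schwartz functions, as a Schwartz function. -/
noncomputable def mulS (f g : 𝓢(ℝ × ℝ, ℝ)) : 𝓢(ℝ × ℝ, ℝ) :=
  SchwartzMap.bilinLeftCLM (ContinuousLinearMap.mul ℝ ℝ) (schwartz_htg g) f

@[simp] lemma mulS_apply (f g : 𝓢(ℝ × ℝ, ℝ)) (p : ℝ × ℝ) : mulS f g p = f p * g p := rfl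

lemma fderiv_mulS_apply (f g : 𝓢(ℝ × ℝ, ℝ)) (p v : ℝ × ℝ) :
    fderiv ℝ (⇑(mulS f g)) p v = fderiv ℝ f p v * g p + f p * fderiv ℝ g p v := by
  have h : ⇑(mulS f g) = fun q => f q * g q := rfl
  rw [h, fderiv_fun_mul f.differentiableAt g.differentiableAt]
  simp [ContinuousLinearMap.add_apply, ContinuousLinearMap.smul_apply, smul_eq_mul]
  ring

lemma fderiv_subS_apply (f g : 𝓢(ℝ × ℝ, ℝ)) (p v : ℝ × ℝ) :
    fderiv ℝ (⇑(f - g)) p v = fderiv ℝ f p v - fderiv ℝ g p v := by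
  have h : ⇑(f - g) = fun q => f q - g q := by funext q; simp [SchwartzMap.sub_apply]
  rw [h, fderiv_fun_sub f.differentiableAt g.differentiableAt]
  simp

lemma fderiv_addS_apply (f g : 𝓢(ℝ × ℝ, ℝ)) (p v : ℝ × ℝ) :
    fderiv ℝ (⇑(f + g)) p v = fderiv ℝ f p v + fderiv ℝ g p v := by
  have h : ⇑(f + g) = fun q => f q + g q := by funext q; simp [SchwartzMap.add_apply]
  rw [h, fderiv_fun_add f.differentiableAt g.differentiableAt]
  simp

/-- Clairaut's theorem for Schwartz functions on `ℝ²`. -/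
lemma clairaut (f : 𝓢(ℝ × ℝ, ℝ)) (v w p : ℝ × ℝ) :
    fderiv ℝ (fun q => fderiv ℝ f q v) p w = fderiv ℝ (fun q => fderiv ℝ f q w) p v := by
  have hd : DifferentiableAt ℝ (fderiv ℝ (⇑f)) p :=
    (SchwartzMap.fderivCLM ℝ (ℝ × ℝ) ℝ f).differentiableAt
  have hs : IsSymmSndFDerivAt ℝ (⇑f) p := by
    apply (f.smooth 2).contDiffAt.isSymmSndFDerivAt
    norm_num
  have h1 : fderiv ℝ (fun q => fderiv ℝ f q v) p w = fderiv ℝ (fderiv ℝ (⇑f)) p w v := by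
    rw [fderiv_clm_apply hd (differentiableAt_const v)]
    simp
  have h2 : fderiv ℝ (fun q => fderiv ℝ f q w) p v = fderiv ℝ (fderiv ℝ (⇑f)) p v w := by
    rw [fderiv_clm_apply hd (differentiableAt_const w)]
    simp
  rw [h1, h2, hs.eq]

lemma htg1 (y : ℝ) : Function.HasTemperateGrowth (fun x : ℝ => ((x, y) : ℝ × ℝ)) := by
  apply Function.HasTemperateGrowth.of_fderiv (k := 1) (C := 1 + ‖y‖)
  · have : (fderiv ℝ (fun x : ℝ => ((x, y) : ℝ × ℝ)))
        = fun _ => (ContinuousLinearMap.id ℝ ℝ).prod 0 := by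
      funext x
      exact ((hasFDerivAt_id x).prodMk (hasFDerivAt_const y x)).fderiv
    rw [this]
    exact Function.HasTemperateGrowth.const _
  · exact differentiable_id.prodMk (differentiable_const y)
  · intro x
    have h : ‖((x, y) : ℝ × ℝ)‖ = max ‖x‖ ‖y‖ := rfl
    rw [h, pow_one]
    have h1 : (0:ℝ) ≤ ‖x‖ := norm_nonneg x
    have h2 : (0:ℝ) ≤ ‖y‖ := norm_nonneg y
    rcases max_cases ‖x‖ ‖y‖ with ⟨he, _⟩ | ⟨he, _⟩ <;> rw [he] <;> nlinarith

lemma htg2 (x : ℝ) : Function.HasTemperateGrowth (fun y : ℝ => ((x, y) : ℝ × ℝ)) := by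
  apply Function.HasTemperateGrowth.of_fderiv (k := 1) (C := 1 + ‖x‖)
  · have : (fderiv ℝ (fun y : ℝ => ((x, y) : ℝ × ℝ)))
        = fun _ => (0 : ℝ →L[ℝ] ℝ).prod (ContinuousLinearMap.id ℝ ℝ) := by
      funext y
      exact ((hasFDerivAt_const x y).prodMk (hasFDerivAt_id y)).fderiv
    rw [this]
    exact Function.HasTemperateGrowth.const _
  · exact (differentiable_const x).prodMk differentiable_id
  · intro y
    have h : ‖((x, y) : ℝ × ℝ)‖ = max ‖x‖ ‖y‖ := rfl
    rw [h, pow_one]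
    have h1 : (0:ℝ) ≤ ‖x‖ := norm_nonneg x
    have h2 : (0:ℝ) ≤ ‖y‖ := norm_nonneg y
    rcases max_cases ‖x‖ ‖y‖ with ⟨he, _⟩ | ⟨he, _⟩ <;> rw [he] <;> nlinarith

/-- Horizontal sections of a Schwartz function on `ℝ²` are Schwartz. -/
noncomputable def sect1 (y : ℝ) : 𝓢(ℝ × ℝ, ℝ) →L[ℝ] 𝓢(ℝ, ℝ) :=
  SchwartzMap.compCLM ℝ (htg1 y)
    ⟨1, 1, fun x => by
      have := norm_fst_le ((x, y) : ℝ × ℝ)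
      simp only [pow_one, one_mul] at *
      have h2 : (0:ℝ) ≤ ‖((x, y) : ℝ × ℝ)‖ := norm_nonneg _
      linarith⟩

/-- Vertical sections of a Schwartz function on `ℝ²` are Schwartz. -/
noncomputable def sect2 (x : ℝ) : 𝓢(ℝ × ℝ, ℝ) →L[ℝ] 𝓢(ℝ, ℝ) :=
  SchwartzMap.compCLM ℝ (htg2 x)
    ⟨1, 1, fun y => by
      have := norm_snd_le ((x, y) : ℝ × ℝ)
      simp only [pow_one, one_mul] at *
      have h2 : (0:ℝ) ≤ ‖((x, y) : ℝ × ℝ)‖ := norm_nonneg _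
      linarith⟩

lemma inner1 (f : 𝓢(ℝ × ℝ, ℝ)) (y : ℝ) :
    ∫ x : ℝ, fderiv ℝ f (x, y) ((1:ℝ), (0:ℝ)) = 0 := by
  apply integral_eq_zero_of_hasDerivAt_of_integrable (f := fun x : ℝ => f (x, y))
  · intro x
    have h1 : HasFDerivAt (fun x : ℝ => ((x, y) : ℝ × ℝ))
        ((ContinuousLinearMap.id ℝ ℝ).prod 0) x :=
      (hasFDerivAt_id x).prodMk (hasFDerivAt_const y x)
    have h3 := ((f.differentiableAt.hasFDerivAt).comp x h1).hasDerivAt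
    simpa [Function.comp_def] using h3
  · exact (sect1 y (LineDeriv.lineDerivOpCLM ℝ 𝓢(ℝ × ℝ, ℝ) ((1:ℝ), (0:ℝ)) f)).integrable
  · exact (sect1 y f).integrable

lemma inner2 (f : 𝓢(ℝ × ℝ, ℝ)) (x : ℝ) :
    ∫ y : ℝ, fderiv ℝ f (x, y) ((0:ℝ), (1:ℝ)) = 0 := by
  apply integral_eq_zero_of_hasDerivAt_of_integrable (f := fun y : ℝ => f (x, y))
  · intro y
    have h1 : HasFDerivAt (fun y : ℝ => ((x, y) : ℝ × ℝ))
        ((0 : ℝ →L[ℝ] ℝ).prod (ContinuousLinearMap.id ℝ ℝ)) y :=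
      (hasFDerivAt_const x y).prodMk (hasFDerivAt_id y)
    have h3 := ((f.differentiableAt.hasFDerivAt).comp y h1).hasDerivAt
    simpa [Function.comp_def] using h3
  · exact (sect2 x (LineDeriv.lineDerivOpCLM ℝ 𝓢(ℝ × ℝ, ℝ) ((0:ℝ), (1:ℝ)) f)).integrable
  · exact (sect2 x f).integrable

lemma integral_D1_eq_zero (f : 𝓢(ℝ × ℝ, ℝ)) :
    ∫ p : ℝ × ℝ, fderiv ℝ f p ((1:ℝ), (0:ℝ)) = 0 := by
  have hInt : Integrable (⇑(LineDeriv.lineDerivOpCLM ℝ 𝓢(ℝ × ℝ, ℝ) ((1:ℝ), (0:ℝ)) f)) (volume.prod volume) := by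
    rw [← MeasureTheory.Measure.volume_eq_prod ℝ ℝ]
    exact (LineDeriv.lineDerivOpCLM ℝ 𝓢(ℝ × ℝ, ℝ) ((1:ℝ), (0:ℝ)) f).integrable
  have h := MeasureTheory.integral_prod_symm _ hInt
  rw [MeasureTheory.Measure.volume_eq_prod ℝ ℝ]
  calc (∫ p : ℝ × ℝ, fderiv ℝ f p ((1:ℝ), (0:ℝ)) ∂(volume.prod volume))
      = ∫ y : ℝ, ∫ x : ℝ, fderiv ℝ f (x, y) ((1:ℝ), (0:ℝ)) := h
    _ = 0 := by simp [inner1 f]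

lemma integral_D2_eq_zero (f : 𝓢(ℝ × ℝ, ℝ)) :
    ∫ p : ℝ × ℝ, fderiv ℝ f p ((0:ℝ), (1:ℝ)) = 0 := by
  have hInt : Integrable (⇑(LineDeriv.lineDerivOpCLM ℝ 𝓢(ℝ × ℝ, ℝ) ((0:ℝ), (1:ℝ)) f)) (volume.prod volume) := by
    rw [← MeasureTheory.Measure.volume_eq_prod ℝ ℝ]
    exact (LineDeriv.lineDerivOpCLM ℝ 𝓢(ℝ × ℝ, ℝ) ((0:ℝ), (1:ℝ)) f).integrable
  have h := MeasureTheory.integral_prod _ hInt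
  rw [MeasureTheory.Measure.volume_eq_prod ℝ ℝ]
  calc (∫ p : ℝ × ℝ, fderiv ℝ f p ((0:ℝ), (1:ℝ)) ∂(volume.prod volume))
      = ∫ x : ℝ, ∫ y : ℝ, fderiv ℝ f (x, y) ((0:ℝ), (1:ℝ)) := h
    _ = 0 := by simp [inner2 f]

end CrossAux

open CrossAux

/-- for a Schwartz function `ψ` on `ℝ²`,
`∫ ψ_y (∂_xΔψ) ψ_x − ∫ ψ_x (∂_yΔψ) ψ_x = −∫ ψ_y |∇ψ_x|² + ∫ ψ_x (∇ψ_x·∇ψ_y)`. -/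
theorem cross_term_identity_psi (ψ : SchwartzMap (ℝ × ℝ) ℝ) :
    (∫ p : ℝ × ℝ, pd2 (⇑ψ) p * pd1 (lap (⇑ψ)) p * pd1 (⇑ψ) p)
      - (∫ p : ℝ × ℝ, pd1 (⇑ψ) p * pd2 (lap (⇑ψ)) p * pd1 (⇑ψ) p)
      = -(∫ p : ℝ × ℝ,
            pd2 (⇑ψ) p * ((pd1 (pd1 (⇑ψ)) p) ^ 2 + (pd2 (pd1 (⇑ψ)) p) ^ 2))
        + ∫ p : ℝ × ℝ,
            pd1 (⇑ψ) p * (pd1 (pd1 (⇑ψ)) p * pd1 (pd2 (⇑ψ)) p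
              + pd2 (pd1 (⇑ψ)) p * pd2 (pd2 (⇑ψ)) p) := by
  -- Schwartz-map versions of all the derivatives involved
  have e₁ : (ℝ × ℝ) := ((1:ℝ), (0:ℝ))
  let a : 𝓢(ℝ × ℝ, ℝ) := LineDeriv.lineDerivOpCLM ℝ 𝓢(ℝ × ℝ, ℝ) ((1:ℝ), (0:ℝ)) ψ
  let b : 𝓢(ℝ × ℝ, ℝ) := LineDeriv.lineDerivOpCLM ℝ 𝓢(ℝ × ℝ, ℝ) ((0:ℝ), (1:ℝ)) ψ
  let a1 : 𝓢(ℝ × ℝ, ℝ) := LineDeriv.lineDerivOpCLM ℝ 𝓢(ℝ × ℝ, ℝ) ((1:ℝ), (0:ℝ)) a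
  let a2 : 𝓢(ℝ × ℝ, ℝ) := LineDeriv.lineDerivOpCLM ℝ 𝓢(ℝ × ℝ, ℝ) ((0:ℝ), (1:ℝ)) a
  let b1 : 𝓢(ℝ × ℝ, ℝ) := LineDeriv.lineDerivOpCLM ℝ 𝓢(ℝ × ℝ, ℝ) ((1:ℝ), (0:ℝ)) b
  let b2 : 𝓢(ℝ × ℝ, ℝ) := LineDeriv.lineDerivOpCLM ℝ 𝓢(ℝ × ℝ, ℝ) ((0:ℝ), (1:ℝ)) b
  let L1 : 𝓢(ℝ × ℝ, ℝ) := LineDeriv.lineDerivOpCLM ℝ 𝓢(ℝ × ℝ, ℝ) ((1:ℝ), (0:ℝ)) (a1 + b2)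
  let L2 : 𝓢(ℝ × ℝ, ℝ) := LineDeriv.lineDerivOpCLM ℝ 𝓢(ℝ × ℝ, ℝ) ((0:ℝ), (1:ℝ)) (a1 + b2)
  let I₁ : 𝓢(ℝ × ℝ, ℝ) := mulS (mulS b L1) a
  let I₂ : 𝓢(ℝ × ℝ, ℝ) := mulS (mulS a L2) a
  let I₃ : 𝓢(ℝ × ℝ, ℝ) := mulS b (mulS a1 a1 + mulS a2 a2)
  let I₄ : 𝓢(ℝ × ℝ, ℝ) := mulS a (mulS a1 b1 + mulS a2 b2)
  let F : 𝓢(ℝ × ℝ, ℝ) := mulS (mulS a b) a1 - mulS (mulS a a) b1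
  let G : 𝓢(ℝ × ℝ, ℝ) := mulS (mulS a b) a2 - mulS (mulS a a) b2
  -- identify the four integrands with Schwartz maps
  have he1 : (fun p : ℝ × ℝ => pd2 (⇑ψ) p * pd1 (lap (⇑ψ)) p * pd1 (⇑ψ) p) = ⇑I₁ := rfl
  have he2 : (fun p : ℝ × ℝ => pd1 (⇑ψ) p * pd2 (lap (⇑ψ)) p * pd1 (⇑ψ) p) = ⇑I₂ := rfl
  have he3 : (fun p : ℝ × ℝ =>
      pd2 (⇑ψ) p * ((pd1 (pd1 (⇑ψ)) p) ^ 2 + (pd2 (pd1 (⇑ψ)) p) ^ 2)) = ⇑I₃ := by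
    funext p
    show pd2 (⇑ψ) p * ((a1 p) ^ 2 + (a2 p) ^ 2) = I₃ p
    have hb : pd2 (⇑ψ) p = b p := rfl
    simp only [I₃, mulS_apply, SchwartzMap.add_apply, hb]
    ring
  have he4 : (fun p : ℝ × ℝ =>
      pd1 (⇑ψ) p * (pd1 (pd1 (⇑ψ)) p * pd1 (pd2 (⇑ψ)) p
        + pd2 (pd1 (⇑ψ)) p * pd2 (pd2 (⇑ψ)) p)) = ⇑I₄ := rfl
  rw [he1, he2, he3, he4]
  -- Clairaut relations
  have hc1 : ∀ q : ℝ × ℝ, fderiv ℝ (⇑b) q ((1:ℝ), (0:ℝ)) = fderiv ℝ (⇑a) q ((0:ℝ), (1:ℝ)) :=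
    fun q => clairaut ψ ((0:ℝ), (1:ℝ)) ((1:ℝ), (0:ℝ)) q
  have hfun : ⇑b1 = ⇑a2 := funext fun q => hc1 q
  have hc2 : ∀ p : ℝ × ℝ, fderiv ℝ (⇑b2) p ((1:ℝ), (0:ℝ)) = fderiv ℝ (⇑a2) p ((0:ℝ), (1:ℝ)) := by
    intro p
    rw [← hfun]
    exact clairaut b ((0:ℝ), (1:ℝ)) ((1:ℝ), (0:ℝ)) p
  have hc3 : ∀ p : ℝ × ℝ, fderiv ℝ (⇑a2) p ((1:ℝ), (0:ℝ)) = fderiv ℝ (⇑a1) p ((0:ℝ), (1:ℝ)) :=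
    fun p => clairaut a ((0:ℝ), (1:ℝ)) ((1:ℝ), (0:ℝ)) p
  -- value identifications
  have ha1v : ∀ q : ℝ × ℝ, a1 q = fderiv ℝ (⇑a) q ((1:ℝ), (0:ℝ)) := fun _ => rfl
  have ha2v : ∀ q : ℝ × ℝ, a2 q = fderiv ℝ (⇑a) q ((0:ℝ), (1:ℝ)) := fun _ => rfl
  have hb2v : ∀ q : ℝ × ℝ, b2 q = fderiv ℝ (⇑b) q ((0:ℝ), (1:ℝ)) := fun _ => rfl
  have hL1v : ∀ q : ℝ × ℝ, L1 q = fderiv ℝ (⇑(a1 + b2)) q ((1:ℝ), (0:ℝ)) := fun _ => rfl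
  have hL2v : ∀ q : ℝ × ℝ, L2 q = fderiv ℝ (⇑(a1 + b2)) q ((0:ℝ), (1:ℝ)) := fun _ => rfl
  -- integrability
  have hI1 : Integrable (⇑I₁) volume := I₁.integrable
  have hI2 : Integrable (⇑I₂) volume := I₂.integrable
  have hI3 : Integrable (⇑I₃) volume := I₃.integrable
  have hI4 : Integrable (⇑I₄) volume := I₄.integrable
  -- the divergence identity and vanishing of the integral of the divergence
  have hkey : ∫ p : ℝ × ℝ, (I₁ p - I₂ p + I₃ p - I₄ p) = 0 := by
    have hptw : (fun p : ℝ × ℝ => I₁ p - I₂ p + I₃ p - I₄ p)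
        = fun p => fderiv ℝ (⇑F) p ((1:ℝ), (0:ℝ)) + fderiv ℝ (⇑G) p ((0:ℝ), (1:ℝ)) := by
      funext p
      simp only [I₁, I₂, I₃, I₄, F, G, mulS_apply, SchwartzMap.add_apply,
        fderiv_subS_apply, fderiv_mulS_apply, fderiv_addS_apply,
        hL1v, hL2v, ha1v, ha2v, hb2v, hfun, hc1, hc2, hc3]
      ring
    have hFi : Integrable (fun p : ℝ × ℝ => fderiv ℝ (⇑F) p ((1:ℝ), (0:ℝ))) volume :=
      (LineDeriv.lineDerivOpCLM ℝ 𝓢(ℝ × ℝ, ℝ) ((1:ℝ), (0:ℝ)) F).integrable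
    have hGi : Integrable (fun p : ℝ × ℝ => fderiv ℝ (⇑G) p ((0:ℝ), (1:ℝ))) volume :=
      (LineDeriv.lineDerivOpCLM ℝ 𝓢(ℝ × ℝ, ℝ) ((0:ℝ), (1:ℝ)) G).integrable
    rw [hptw, integral_add hFi hGi, integral_D1_eq_zero F, integral_D2_eq_zero G, add_zero]
  have hsplit : ∫ p : ℝ × ℝ, (I₁ p - I₂ p + I₃ p - I₄ p)
      = (∫ p : ℝ × ℝ, I₁ p) - (∫ p : ℝ × ℝ, I₂ p) + (∫ p : ℝ × ℝ, I₃ p)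
        - ∫ p : ℝ × ℝ, I₄ p := by
    have hI12 : Integrable (fun p : ℝ × ℝ => I₁ p - I₂ p) volume := hI1.sub hI2
    have hI123 : Integrable (fun p : ℝ × ℝ => I₁ p - I₂ p + I₃ p) volume := hI12.add hI3
    rw [integral_sub hI123 hI4, integral_add hI12 hI3, integral_sub hI1 hI2]
  rw [hsplit] at hkey
  linarith [hkey]
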